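/- For a topological group X, the following are equivalent: (1) X is separable; (2) there exists a countable set S ⊆ X such that X = S·U for every neighborhood U of the identity; (3) there exists a countable set S ⊆ X such that X = U·S for every neighborhood U of the identity. -/

import Mathlib

open Pointwise

private lemma aux_left {X : Type*} [Group X] [TopologicalSpace X] [IsTopologicalGroup X]
    {S : Set X} :
    Dense S ↔ ∀ U ∈ nhds (1 : X), S * U = Set.univ := by
  constructor
  · intro hS U hU
    ext x
    simp only [Set.mem_univ, iff_true]
    have hU' : (x * ·) '' U⁻¹ ∈ nhds x := by
      have := (Homeomorph.mulLeft x).isOpenMap.image_mem_nhds (inv_mem_nhds_one X hU)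
      simpa using this
    obtain ⟨s, hs1, hs2⟩ := (mem_closure_iff_nhds.1 (hS x) _ hU')
    obtain ⟨u, hu, rfl⟩ := hs1
    rw [Set.mem_inv] at hu
    exact ⟨x * u, hs2, u⁻¹, hu, by group⟩
  · intro h x
    rw [mem_closure_iff_nhds]
    intro t ht
    set U : Set X := ((x⁻¹ * ·) '' t)⁻¹ with hUdef
    have hU : U ∈ nhds (1 : X) := by
      apply inv_mem_nhds_one
      have := (Homeomorph.mulLeft x⁻¹).isOpenMap.image_mem_nhds ht
      simpa using this
    have hx : x ∈ S * U := (h U hU) ▸ Set.mem_univ x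
    obtain ⟨s, hs, u, hu, hsu⟩ := hx
    rw [hUdef, Set.mem_inv] at hu
    obtain ⟨y, hy, hyu⟩ := hu
    have : s = y := by
      have h1 : s * u = x := hsu
      have h2 : x⁻¹ * y = u⁻¹ := hyu
      rw [← h1] at h2
      have h3 : y = s := by
        calc y = (s * u) * ((s * u)⁻¹ * y) := by group
          _ = (s * u) * u⁻¹ := by rw [h2]
          _ = s := by group
      exact h3.symm
    exact ⟨s, this ▸ hy, hs⟩

private lemma aux_right {X : Type*} [Group X] [TopologicalSpace X] [IsTopologicalGroup X]
    {S : Set X} :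
    Dense S ↔ ∀ U ∈ nhds (1 : X), U * S = Set.univ := by
  constructor
  · intro hS U hU
    ext x
    simp only [Set.mem_univ, iff_true]
    have hU' : (· * x) '' U⁻¹ ∈ nhds x := by
      have := (Homeomorph.mulRight x).isOpenMap.image_mem_nhds (inv_mem_nhds_one X hU)
      simpa using this
    obtain ⟨s, hs1, hs2⟩ := (mem_closure_iff_nhds.1 (hS x) _ hU')
    obtain ⟨u, hu, rfl⟩ := hs1
    rw [Set.mem_inv] at hu
    exact ⟨u⁻¹, hu, u * x, hs2, by group⟩
  · intro h x
    rw [mem_closure_iff_nhds]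
    intro t ht
    set U : Set X := ((· * x⁻¹) '' t)⁻¹ with hUdef
    have hU : U ∈ nhds (1 : X) := by
      apply inv_mem_nhds_one
      have := (Homeomorph.mulRight x⁻¹).isOpenMap.image_mem_nhds ht
      simpa using this
    have hx : x ∈ U * S := (h U hU) ▸ Set.mem_univ x
    obtain ⟨u, hu, s, hs, hsu⟩ := hx
    rw [hUdef, Set.mem_inv] at hu
    obtain ⟨y, hy, hyu⟩ := hu
    have : s = y := by
      have h1 : u * s = x := hsu
      have h2 : y * x⁻¹ = u⁻¹ := hyu
      rw [← h1] at h2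
      have h3 : y = s := by
        calc y = (y * (u * s)⁻¹) * (u * s) := by group
          _ = u⁻¹ * (u * s) := by rw [h2]
          _ = s := by group
      exact h3.symm
    exact ⟨s, this ▸ hy, hs⟩

theorem stmt0 (X : Type*) [Group X] [TopologicalSpace X] [IsTopologicalGroup X] :
    List.TFAE
      [TopologicalSpace.SeparableSpace X,
       ∃ S : Set X, S.Countable ∧ ∀ U ∈ nhds (1 : X), S * U = Set.univ,
       ∃ S : Set X, S.Countable ∧ ∀ U ∈ nhds (1 : X), U * S = Set.univ] := by
  tfae_have 1 → 2 := by
    rintro ⟨S, hSc, hSd⟩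
    exact ⟨S, hSc, aux_left.1 hSd⟩
  tfae_have 2 → 1 := by
    rintro ⟨S, hSc, h⟩
    exact ⟨S, hSc, aux_left.2 h⟩
  tfae_have 1 → 3 := by
    rintro ⟨S, hSc, hSd⟩
    exact ⟨S, hSc, aux_right.1 hSd⟩
  tfae_have 3 → 1 := by
    rintro ⟨S, hSc, h⟩
    exact ⟨S, hSc, aux_right.2 h⟩
  tfae_finish
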